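/- arXiv:2502.08306 — 2 statements merged into one kernel-verified Lean document; each statement's English description precedes it below -/
import Mathlib

section
/- Let K be a triangle in ℝ² with vertices a₁,a₂,a₃, let b_K denote the cubic element bubble function on K, and let P_K = {q + p b_K : q, p ∈ ℙ₁(K)} (dimension 6). Let u₀ be a continuous function on K̄ with u₀ > 0 on K̄. If w = q + p b_K ∈ P_K satisfies w(aᵢ) = 0 for i=1,2,3 and ∫_σ u₀ ∂w/∂n_{K,σ} dS = 0 for each of the three edges σ of K, then w = 0. Consequently (K, P_K, Σ_K) with degrees of freedom Σ_K = {vertex values} ∪ {weighted edge normal-flux integrals with weight u₀} is a finite element. -/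
open scoped RealInnerProductSpace

noncomputable section

private lemma affine_vanish_aux
    (a : Fin 3 → EuclideanSpace ℝ (Fin 2))
    (ha : AffineIndependent ℝ a)
    (f : EuclideanSpace ℝ (Fin 2) →ᵃ[ℝ] ℝ)
    (hf : ∀ i, f (a i) = 0) : ∀ x, f x = 0 := by
  have hLI : LinearIndependent ℝ fun i : {x : Fin 3 // x ≠ (0:Fin 3)} => a i -ᵥ a 0 :=
    (affineIndependent_iff_linearIndependent_vsub ℝ a 0).mp ha
  have hcard : Fintype.card {x : Fin 3 // x ≠ (0:Fin 3)} =
      Module.finrank ℝ (EuclideanSpace ℝ (Fin 2)) := by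
    simp [Fintype.card_subtype_compl]
  have : Nonempty {x : Fin 3 // x ≠ (0:Fin 3)} := ⟨⟨1, by decide⟩⟩
  have hspan := hLI.span_eq_top_of_card_eq_finrank hcard
  have hlin : f.linear = (0 : EuclideanSpace ℝ (Fin 2) →ₗ[ℝ] ℝ) := by
    apply LinearMap.ext_on_range hspan
    intro i
    have h := f.linearMap_vsub (a i) (a 0)
    simp only [vsub_eq_sub] at h
    simp [h, hf]
  intro x
  have hx : x = (x - a 0) +ᵥ a 0 := by
    simp [vadd_eq_add]
  rw [hx, AffineMap.map_vadd, hlin]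
  simp [hf 0]

private lemma affine_line_eval
    (f : EuclideanSpace ℝ (Fin 2) →ᵃ[ℝ] ℝ) (x y : EuclideanSpace ℝ (Fin 2)) (t : ℝ) :
    f (x + t • (y - x)) = f x + t * (f y - f x) := by
  have hx : x + t • (y - x) = (t • (y - x)) +ᵥ x := by
    simp [vadd_eq_add, add_comm]
  rw [hx, AffineMap.map_vadd, f.linear.map_smul]
  have h := f.linearMap_vsub y x
  simp only [vsub_eq_sub] at h
  simp [h, smul_eq_mul]
  ring

private lemma affine_hasFDerivAt
    (f : EuclideanSpace ℝ (Fin 2) →ᵃ[ℝ] ℝ) (x : EuclideanSpace ℝ (Fin 2)) :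
    HasFDerivAt f (LinearMap.toContinuousLinearMap f.linear) x := by
  have h : (f : EuclideanSpace ℝ (Fin 2) → ℝ) = fun y => f.linear y + f 0 := by
    funext y
    conv_lhs => rw [f.decomp]
    simp
  rw [h]
  exact ((LinearMap.toContinuousLinearMap f.linear).hasFDerivAt).add_const (f 0)

private lemma tri_sign {x y z : ℝ}
    (Qxy : (0 ≤ x → 0 ≤ y → x = 0 ∧ y = 0) ∧ (x ≤ 0 → y ≤ 0 → x = 0 ∧ y = 0))
    (Qyz : (0 ≤ y → 0 ≤ z → y = 0 ∧ z = 0) ∧ (y ≤ 0 → z ≤ 0 → y = 0 ∧ z = 0))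
    (Qzx : (0 ≤ z → 0 ≤ x → z = 0 ∧ x = 0) ∧ (z ≤ 0 → x ≤ 0 → z = 0 ∧ x = 0)) :
    x = 0 ∧ y = 0 ∧ z = 0 := by
  have hx : x = 0 := by
    rcases lt_trichotomy x 0 with h | h | h
    · -- x < 0 : then y > 0, z < 0, then x > 0 contradiction
      have hy : 0 < y := by
        by_contra hy
        push_neg at hy
        exact absurd (Qxy.2 h.le hy).1 (ne_of_lt h)
      have hz : z < 0 := by
        by_contra hz
        push_neg at hz
        exact absurd (Qyz.1 hy.le hz).1 (ne_of_gt hy)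
      exact absurd (Qzx.2 hz.le h.le).2 (ne_of_lt h)
    · exact h
    · have hy : y < 0 := by
        by_contra hy
        push_neg at hy
        exact absurd (Qxy.1 h.le hy).1 (ne_of_gt h)
      have hz : 0 < z := by
        by_contra hz
        push_neg at hz
        exact absurd (Qyz.2 hy.le hz).1 (ne_of_lt hy)
      exact absurd (Qzx.1 hz.le h.le).2 (ne_of_gt h)
  refine ⟨hx, ?_, ?_⟩
  · rcases le_total 0 y with h | h
    · exact (Qxy.1 hx.ge h).2
    · exact (Qxy.2 hx.le h).2
  · rcases le_total 0 z with h | h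
    · exact (Qzx.1 h hx.ge).1
    · exact (Qzx.2 h hx.le).1


/-- Unisolvence of the weighted Morley-type element: on a (nondegenerate) triangle `K` with
vertices `a 0, a 1, a 2`, barycentric coordinates `lam i`, cubic bubble `b_K = ∏ lam i`, and
outer unit normals `n i` on the edges, if `w = q + p·b_K` (with `q, p` affine) vanishes at the
three vertices and the weighted normal-flux integrals `∫_σ u₀ ∂w/∂n dS` vanish on all three
edges (with a weight `u₀` continuous and positive on `K̄`), then `w = 0`.  Consequently
`(K, P_K, Σ_K)` is a finite element. -/
theorem stmt_2
    (a : Fin 3 → EuclideanSpace ℝ (Fin 2))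
    (ha : AffineIndependent ℝ a)
    (lam : Fin 3 → (EuclideanSpace ℝ (Fin 2) →ᵃ[ℝ] ℝ))
    (hlam : ∀ i j, lam i (a j) = if i = j then 1 else 0)
    (hsum : ∀ x, ∑ i, lam i x = 1)
    (bK : EuclideanSpace ℝ (Fin 2) → ℝ)
    (hbK : ∀ x, bK x = ∏ i, lam i x)
    (K : Set (EuclideanSpace ℝ (Fin 2)))
    (hKdef : K = convexHull ℝ (Set.range a))
    -- outer unit normals of the edges (edge `i` is opposite vertex `i`)
    (n : Fin 3 → EuclideanSpace ℝ (Fin 2))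
    (hn_unit : ∀ i, ‖n i‖ = 1)
    (hn_orth : ∀ i, ⟪n i, a (i + 2) - a (i + 1)⟫ = 0)
    (hn_out : ∀ i, (lam i).linear (n i) < 0)
    -- positive continuous weight
    (u0 : EuclideanSpace ℝ (Fin 2) → ℝ)
    (hu0cont : ContinuousOn u0 K)
    (hu0pos : ∀ x ∈ K, 0 < u0 x)
    -- element of `P_K` with vanishing degrees of freedom
    (q p : EuclideanSpace ℝ (Fin 2) →ᵃ[ℝ] ℝ)
    (w : EuclideanSpace ℝ (Fin 2) → ℝ)
    (hw : ∀ x, w x = q x + p x * bK x)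
    (hvertex : ∀ i, w (a i) = 0)
    (hflux : ∀ i, ∫ t in (0:ℝ)..1,
        u0 (a (i + 1) + t • (a (i + 2) - a (i + 1)))
          * fderiv ℝ w (a (i + 1) + t • (a (i + 2) - a (i + 1))) (n i) = 0) :
    ∀ x, w x = 0 := by
    classical
  have hne1 : ∀ i : Fin 3, i ≠ i + 1 := by decide
  have hne2 : ∀ i : Fin 3, i ≠ i + 2 := by decide
  have hne12 : ∀ i : Fin 3, i + 1 ≠ i + 2 := by decide
  -- the bubble vanishes at the vertices
  have hbK0 : ∀ i, bK (a i) = 0 := by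
    intro i
    rw [hbK]
    refine Finset.prod_eq_zero (Finset.mem_univ (i + 1)) ?_
    rw [hlam]
    simp [(hne1 i).symm]
  -- q vanishes at the vertices, hence everywhere
  have hq0 : ∀ x, q x = 0 := by
    refine affine_vanish_aux a ha q ?_
    intro i
    have h := hvertex i
    rw [hw] at h
    simpa [hbK0 i] using h
  have hw' : ∀ x, w x = p x * (lam 0 x * (lam 1 x * lam 2 x)) := by
    intro x
    rw [hw, hq0, hbK, Fin.prod_univ_three]
    ring
  -- the sign conditions on each edge
  have hQ : ∀ i : Fin 3,
      (0 ≤ p (a (i+1)) → 0 ≤ p (a (i+2)) → p (a (i+1)) = 0 ∧ p (a (i+2)) = 0) ∧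
      (p (a (i+1)) ≤ 0 → p (a (i+2)) ≤ 0 → p (a (i+1)) = 0 ∧ p (a (i+2)) = 0) := by
    intro i
    have hprod : ∀ x, lam 0 x * (lam 1 x * lam 2 x)
        = lam i x * (lam (i+1) x * lam (i+2) x) := by
      intro x
      have hbij : ∏ j, lam (i + j) x = ∏ j, lam j x :=
        Fintype.prod_equiv (Equiv.addLeft i) _ _ (fun j => rfl)
      rw [Fin.prod_univ_three, Fin.prod_univ_three, add_zero] at hbij
      rw [← mul_assoc, ← hbij, mul_assoc]
    set A := p (a (i+1)) with hA
    set B := p (a (i+2)) with hB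
    set X : ℝ → EuclideanSpace ℝ (Fin 2) :=
      fun t => a (i+1) + t • (a (i+2) - a (i+1)) with hX
    have hlamv : ∀ (j : Fin 3) (t : ℝ),
        lam j (X t) = lam j (a (i+1)) + t * (lam j (a (i+2)) - lam j (a (i+1))) :=
      fun j t => affine_line_eval (lam j) _ _ t
    have hli : ∀ t, lam i (X t) = 0 := by
      intro t
      rw [hlamv, hlam, hlam]
      simp [hne1 i, hne2 i]
    have h1 : ∀ t, lam (i+1) (X t) = 1 - t := by
      intro t
      rw [hlamv, hlam, hlam]
      simp [hne12 i]
      ring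
    have h2 : ∀ t, lam (i+2) (X t) = t := by
      intro t
      rw [hlamv, hlam, hlam]
      simp [(hne12 i).symm]
    have hpX : ∀ t : ℝ, p (X t) = A + t * (B - A) := fun t => affine_line_eval p _ _ t
    -- the derivative of w along the edge
    have hderiv : ∀ t : ℝ, fderiv ℝ w (X t) (n i)
        = (lam i).linear (n i) * (p (X t) * ((1 - t) * t)) := by
      intro t
      have hwfun : w = fun x => p x * (lam i x * (lam (i+1) x * lam (i+2) x)) := by
        funext x
        rw [hw' x, hprod x]
      have hp := affine_hasFDerivAt p (X t)
      have h0 := affine_hasFDerivAt (lam i) (X t)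
      have ha1 := affine_hasFDerivAt (lam (i+1)) (X t)
      have ha2 := affine_hasFDerivAt (lam (i+2)) (X t)
      have hwd := hp.mul (h0.mul (ha1.mul ha2))
      rw [show (⇑p * (⇑(lam i) * (⇑(lam (i + 1)) * ⇑(lam (i + 2))))) = w from hwfun.symm] at hwd
      rw [hwd.fderiv]
      simp only [ContinuousLinearMap.add_apply, ContinuousLinearMap.coe_smul',
        Pi.smul_apply, Pi.mul_apply, smul_eq_mul, LinearMap.coe_toContinuousLinearMap',
        hli t, h1 t, h2 t]
      ring
    -- rewrite the flux integral
    have hflux' : ∫ t in (0:ℝ)..1, (lam i).linear (n i)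
        * (u0 (X t) * ((A + t * (B - A)) * ((1 - t) * t))) = 0 := by
      calc ∫ t in (0:ℝ)..1, (lam i).linear (n i)
            * (u0 (X t) * ((A + t * (B - A)) * ((1 - t) * t)))
          = ∫ t in (0:ℝ)..1, u0 (X t) * fderiv ℝ w (X t) (n i) := by
            apply intervalIntegral.integral_congr
            intro t _
            dsimp only
            rw [hderiv t, hpX t]
            ring
        _ = 0 := by simpa only [hX] using hflux i
    rw [intervalIntegral.integral_const_mul] at hflux'
    have hI : ∫ t in (0:ℝ)..1, u0 (X t) * ((A + t * (B - A)) * ((1 - t) * t)) = 0 := by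
      rcases mul_eq_zero.mp hflux' with h | h
      · exact absurd h (ne_of_lt (hn_out i))
      · exact h
    -- membership and integrability
    have hXmem : ∀ t ∈ Set.Icc (0:ℝ) 1, X t ∈ K := by
      intro t ht
      rw [hKdef]
      have hseg : X t ∈ segment ℝ (a (i+1)) (a (i+2)) := by
        rw [segment_eq_image']
        exact ⟨t, ht, rfl⟩
      exact (convex_convexHull ℝ _).segment_subset
        (subset_convexHull ℝ _ (Set.mem_range_self (i+1))) (subset_convexHull ℝ _ (Set.mem_range_self (i+2))) hseg
    have hXcont : Continuous X := by
      rw [hX]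
      exact continuous_const.add (continuous_id.smul continuous_const)
    have hcont : ContinuousOn
        (fun t : ℝ => u0 (X t) * ((A + t * (B - A)) * ((1 - t) * t))) (Set.Icc 0 1) := by
      apply ContinuousOn.mul
      · exact hu0cont.comp hXcont.continuousOn hXmem
      · fun_prop
    have hintb : IntervalIntegrable
        (fun t : ℝ => u0 (X t) * ((A + t * (B - A)) * ((1 - t) * t))) MeasureTheory.volume 0 1 :=
      hcont.intervalIntegrable_of_Icc zero_le_one
    constructor
    · intro hA0 hB0
      by_contra hcon
      have hor : 0 < A ∨ 0 < B := by
        by_contra hh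
        push_neg at hh
        exact hcon ⟨le_antisymm hh.1 hA0, le_antisymm hh.2 hB0⟩
      have hpos : ∀ t ∈ Set.Ioo (0:ℝ) 1,
          0 < u0 (X t) * ((A + t * (B - A)) * ((1 - t) * t)) := by
        intro t ht
        have hu := hu0pos _ (hXmem t ⟨ht.1.le, ht.2.le⟩)
        have hq1 : 0 < (A + t * (B - A)) := by
          rcases hor with h | h
          · nlinarith [ht.1, ht.2, mul_nonneg ht.1.le hB0]
          · nlinarith [ht.1, ht.2, mul_nonneg (sub_nonneg.mpr ht.2.le) hA0]
        have hq2 : 0 < (1 - t) * t := mul_pos (sub_pos.mpr ht.2) ht.1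
        exact mul_pos hu (mul_pos hq1 hq2)
      have := intervalIntegral.intervalIntegral_pos_of_pos_on hintb hpos zero_lt_one
      rw [hI] at this
      exact lt_irrefl 0 this
    · intro hA0 hB0
      by_contra hcon
      have hor : A < 0 ∨ B < 0 := by
        by_contra hh
        push_neg at hh
        exact hcon ⟨le_antisymm hA0 hh.1, le_antisymm hB0 hh.2⟩
      have hpos : ∀ t ∈ Set.Ioo (0:ℝ) 1,
          0 < -(u0 (X t) * ((A + t * (B - A)) * ((1 - t) * t))) := by
        intro t ht
        have hu := hu0pos _ (hXmem t ⟨ht.1.le, ht.2.le⟩)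
        have hq1 : (A + t * (B - A)) < 0 := by
          rcases hor with h | h
          · nlinarith [ht.1, ht.2, mul_nonpos_of_nonneg_of_nonpos ht.1.le hB0]
          · nlinarith [ht.1, ht.2, mul_nonpos_of_nonneg_of_nonpos (sub_nonneg.mpr ht.2.le) hA0]
        have hq2 : 0 < (1 - t) * t := mul_pos (sub_pos.mpr ht.2) ht.1
        have : u0 (X t) * ((A + t * (B - A)) * ((1 - t) * t)) < 0 :=
          mul_neg_of_pos_of_neg hu (mul_neg_of_neg_of_pos hq1 hq2)
        linarith
      have hneg : IntervalIntegrable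
          (fun t : ℝ => -(u0 (X t) * ((A + t * (B - A)) * ((1 - t) * t))))
          MeasureTheory.volume 0 1 := hintb.neg
      have hpos' := intervalIntegral.intervalIntegral_pos_of_pos_on hneg hpos zero_lt_one
      rw [intervalIntegral.integral_neg, hI] at hpos'
      simp at hpos'
  -- combine the three edges
  obtain ⟨h1z, h2z, h0z⟩ := tri_sign (hQ 0) (hQ 1) (hQ 2)
  have hpz : ∀ x, p x = 0 := by
    refine affine_vanish_aux a ha p ?_
    intro j
    fin_cases j
    · exact h0z
    · exact h1z
    · exact h2z
  intro x
  rw [hw' x, hpz x]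
  ring
end
end

section
/- Decoupling of the solvent equation: if (v₁,…,v_n) are sufficiently smooth solutions of ∂_t v_i = div(v₀∇v_i - v_i∇v₀ + v₀ v_i β z ∇Ψ) for i=1,…,n with v₀ = 1 - Σ_{i=1}^n v_i, then v₀ satisfies ∂_t v₀ = div(∇v₀ - v₀(1-v₀) z β ∇Ψ). In particular, when z = 0, v₀ solves the heat equation ∂_t v₀ = Δv₀. -/
open scoped RealInnerProductSpace

/-- Divergence of a vector field on `ℝ^d`. -/
noncomputable def vdiv {d : ℕ}
    (F : EuclideanSpace ℝ (Fin d) → EuclideanSpace ℝ (Fin d))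
    (x : EuclideanSpace ℝ (Fin d)) : ℝ :=
  ∑ i, ⟪fderiv ℝ F x (EuclideanSpace.single i 1), EuclideanSpace.single i 1⟫

lemma grad_diff {d : ℕ} {f : EuclideanSpace ℝ (Fin d) → ℝ} (hf : ContDiff ℝ 2 f) :
    Differentiable ℝ (gradient f) := by
  have h1 : Differentiable ℝ (fderiv ℝ f) :=
    (hf.fderiv_right (m := 1) (by norm_num)).differentiable one_ne_zero
  have : gradient f = fun x => (InnerProductSpace.toDual ℝ _).symm (fderiv ℝ f x) := rfl
  rw [this]
  exact (InnerProductSpace.toDual ℝ _).symm.differentiable.comp h1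

lemma vdiv_neg_sum {d m : ℕ} (G : Fin m → EuclideanSpace ℝ (Fin d) → EuclideanSpace ℝ (Fin d))
    (x : EuclideanSpace ℝ (Fin d)) (hG : ∀ i, DifferentiableAt ℝ (G i) x) :
    vdiv (fun y => -(∑ i, G i y)) x = -(∑ i, vdiv (G i) x) := by
  unfold vdiv
  have h1 : fderiv ℝ (fun y => -(∑ i, G i y)) x = -(∑ i, fderiv ℝ (G i) x) := by
    rw [fderiv_fun_neg, fderiv_fun_sum (fun i _ => hG i)]
  simp only [h1, ContinuousLinearMap.neg_apply, ContinuousLinearMap.sum_apply,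
    inner_neg_left, sum_inner, Finset.sum_neg_distrib]
  rw [Finset.sum_comm]

/-- Decoupling of the solvent equation: if `v₁,…,v_n` are sufficiently smooth solutions of
`∂ₜ v_i = div(v₀∇v_i - v_i∇v₀ + β z v₀ v_i ∇Ψ)` with `v₀ = 1 - ∑ v_i`, then
`∂ₜ v₀ = div(∇v₀ - z β v₀(1-v₀)∇Ψ)`; in particular for `z = 0`, `∂ₜ v₀ = Δ v₀`. -/
theorem stmt_7 (d n : ℕ)
    (v : Fin (n + 1) → ℝ → EuclideanSpace ℝ (Fin d) → ℝ)
    (Ψ : ℝ → EuclideanSpace ℝ (Fin d) → ℝ)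
    (β z : ℝ)
    (hsmooth_space : ∀ i t, ContDiff ℝ 2 (v i t))
    (hΨsmooth : ∀ t, ContDiff ℝ 2 (Ψ t))
    (hsmooth_time : ∀ i x, Differentiable ℝ (fun s => v i s x))
    (hv0 : ∀ t x, v 0 t x = 1 - ∑ i : Fin n, v i.succ t x)
    (heq : ∀ (i : Fin n) (t : ℝ) (x : EuclideanSpace ℝ (Fin d)),
      deriv (fun s => v i.succ s x) t
        = vdiv (fun y => v 0 t y • gradient (v i.succ t) y
            - v i.succ t y • gradient (v 0 t) y
            + (β * z * (v 0 t y * v i.succ t y)) • gradient (Ψ t) y) x) :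
    (∀ t x, deriv (fun s => v 0 s x) t
        = vdiv (fun y => gradient (v 0 t) y
            - (z * β * (v 0 t y * (1 - v 0 t y))) • gradient (Ψ t) y) x)
    ∧ (z = 0 → ∀ t x, deriv (fun s => v 0 s x) t
        = vdiv (fun y => gradient (v 0 t) y) x) := by
  have main : ∀ t x, deriv (fun s => v 0 s x) t
      = vdiv (fun y => gradient (v 0 t) y
          - (z * β * (v 0 t y * (1 - v 0 t y))) • gradient (Ψ t) y) x := by
    intro t x
    set F : Fin n → EuclideanSpace ℝ (Fin d) → EuclideanSpace ℝ (Fin d) :=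
      fun i y => v 0 t y • gradient (v i.succ t) y
            - v i.succ t y • gradient (v 0 t) y
            + (β * z * (v 0 t y * v i.succ t y)) • gradient (Ψ t) y with hF
    have hva : ∀ j, Differentiable ℝ (v j t) :=
      fun j => (hsmooth_space j t).differentiable (by norm_num)
    have hga : ∀ j, Differentiable ℝ (gradient (v j t)) :=
      fun j => grad_diff (hsmooth_space j t)
    have hgΨ : Differentiable ℝ (gradient (Ψ t)) := grad_diff (hΨsmooth t)
    have hFdiff : ∀ i, Differentiable ℝ (F i) := by
      intro i
      exact (((hva 0).smul (hga i.succ)).sub ((hva i.succ).smul (hga 0))).add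
        (((differentiable_const _).mul ((hva 0).mul (hva i.succ))).smul hgΨ)
    -- gradient identity
    have hgrad : ∀ y, gradient (v 0 t) y = -(∑ i : Fin n, gradient (v i.succ t) y) := by
      intro y
      have hf0 : v 0 t = fun y => 1 - ∑ i : Fin n, v i.succ t y := funext (hv0 t)
      have hfd : fderiv ℝ (v 0 t) y = -(∑ i : Fin n, fderiv ℝ (v i.succ t) y) := by
        rw [hf0, fderiv_const_sub, fderiv_fun_sum (fun i _ => (hva i.succ).differentiableAt)]
      show (InnerProductSpace.toDual ℝ _).symm (fderiv ℝ (v 0 t) y) = _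
      rw [hfd, map_neg, map_sum]
      rfl
    -- time derivative identity
    have hderiv : deriv (fun s => v 0 s x) t
        = -(∑ i : Fin n, deriv (fun s => v i.succ s x) t) := by
      have h1 : (fun s => v 0 s x) = fun s => 1 - ∑ i : Fin n, v i.succ s x :=
        funext fun s => hv0 s x
      rw [h1, deriv_const_sub, deriv_fun_sum (fun i _ => (hsmooth_time i.succ x).differentiableAt)]
    -- pointwise identity of vector fields
    have htgt : (fun y => gradient (v 0 t) y
          - (z * β * (v 0 t y * (1 - v 0 t y))) • gradient (Ψ t) y)
        = fun y => -(∑ i : Fin n, F i y) := by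
      funext y
      have hsv : ∑ i : Fin n, v i.succ t y = 1 - v 0 t y := by
        have := hv0 t y; linarith
      simp only [hF, Finset.sum_add_distrib, Finset.sum_sub_distrib,
        ← Finset.smul_sum, ← Finset.sum_smul, ← Finset.mul_sum, hsv, hgrad y]
      match_scalars <;> ring
    calc deriv (fun s => v 0 s x) t
        = -(∑ i : Fin n, deriv (fun s => v i.succ s x) t) := hderiv
      _ = -(∑ i : Fin n, vdiv (F i) x) := by
            congr 1; exact Finset.sum_congr rfl fun i _ => heq i t x
      _ = vdiv (fun y => -(∑ i : Fin n, F i y)) x :=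
            (vdiv_neg_sum F x fun i => (hFdiff i).differentiableAt).symm
      _ = _ := by rw [← htgt]
  refine ⟨main, fun hz t x => ?_⟩
  rw [main t x]
  subst hz
  congr 1
  funext y
  simp
end
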